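/- Let s ∈ ℝ^L with s_i = exp(z_i)/∑_j exp(z_j) (softmax), where z ∈ ℝ^L satisfies |z_i| ≤ B for all i. If max_i s_i ≥ c for a constant c ∈ (0,1) and L ≥ 2, then B ≥ (1/2) log((c(L−1))/(1−c)). -/

import Mathlib

noncomputable def softmax {L : ℕ} (z : Fin L → ℝ) (i : Fin L) : ℝ :=
  Real.exp (z i) / ∑ j, Real.exp (z j)

theorem stmt3 {L : ℕ} (hL : 2 ≤ L) (z : Fin L → ℝ) (B c : ℝ)
    (hz : ∀ i, |z i| ≤ B) (hc : c ∈ Set.Ioo (0 : ℝ) 1)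
    (hmax : ∃ i, c ≤ softmax z i) :
    (1 / 2) * Real.log (c * ((L : ℝ) - 1) / (1 - c)) ≤ B := by
  obtain ⟨hc0, hc1⟩ := hc
  obtain ⟨i, hi⟩ := hmax
  have hS : (0:ℝ) < ∑ j, Real.exp (z j) :=
    Finset.sum_pos (fun j _ => Real.exp_pos _) ⟨i, Finset.mem_univ i⟩
  have hci : c * (∑ j, Real.exp (z j)) ≤ Real.exp (z i) := by
    unfold softmax at hi
    calc c * (∑ j, Real.exp (z j)) ≤ Real.exp (z i) / (∑ j, Real.exp (z j)) * (∑ j, Real.exp (z j)) :=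
          mul_le_mul_of_nonneg_right hi hS.le
      _ = Real.exp (z i) := div_mul_cancel₀ _ hS.ne'
  have hsplit : (∑ j, Real.exp (z j)) =
      Real.exp (z i) + ∑ j ∈ Finset.univ.erase i, Real.exp (z j) :=
    (Finset.add_sum_erase _ _ (Finset.mem_univ i)).symm
  have hcard : (Finset.univ.erase i).card = L - 1 := by
    simp [Finset.card_erase_of_mem]
  have hrest : ((L:ℝ) - 1) * Real.exp (-B) ≤ ∑ j ∈ Finset.univ.erase i, Real.exp (z j) := by
    have h1 : ∀ j ∈ Finset.univ.erase i, Real.exp (-B) ≤ Real.exp (z j) := by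
      intro j _
      exact Real.exp_le_exp.mpr (neg_le_of_abs_le (hz j))
    have := Finset.card_nsmul_le_sum _ _ _ h1
    rw [hcard, nsmul_eq_mul] at this
    have hLc : ((L - 1 : ℕ) : ℝ) = (L:ℝ) - 1 := by
      have : (1:ℕ) ≤ L := by omega
      push_cast [Nat.cast_sub this]
      ring
    rwa [hLc] at this
  have hzi : Real.exp (z i) ≤ Real.exp B :=
    Real.exp_le_exp.mpr (le_of_abs_le (hz i))
  -- c*(L-1)*exp(-B) ≤ (1-c)*exp(z i)
  have key : c * ((L:ℝ) - 1) * Real.exp (-B) ≤ (1 - c) * Real.exp B := by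
    have h2 : c * (Real.exp (z i) + ((L:ℝ) - 1) * Real.exp (-B)) ≤ Real.exp (z i) := by
      calc c * (Real.exp (z i) + ((L:ℝ) - 1) * Real.exp (-B))
          ≤ c * (∑ j, Real.exp (z j)) := by
            apply mul_le_mul_of_nonneg_left _ hc0.le
            rw [hsplit]
            exact add_le_add_right hrest _
        _ ≤ Real.exp (z i) := hci
    nlinarith [Real.exp_pos (z i)]
  have hLpos : (0:ℝ) < (L:ℝ) - 1 := by
    have : (2:ℝ) ≤ (L:ℝ) := by exact_mod_cast hL
    linarith
  have hargpos : 0 < c * ((L:ℝ) - 1) / (1 - c) :=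
    div_pos (mul_pos hc0 hLpos) (by linarith)
  have key2 : c * ((L:ℝ) - 1) / (1 - c) ≤ Real.exp (2 * B) := by
    rw [div_le_iff₀ (by linarith : (0:ℝ) < 1 - c)]
    have : Real.exp (2 * B) = Real.exp B / Real.exp (-B) := by
      rw [← Real.exp_sub]; ring_nf
    rw [this]
    rw [div_mul_eq_mul_div, le_div_iff₀ (Real.exp_pos _)]
    nlinarith [Real.exp_pos (-B)]
  have := Real.log_le_log hargpos key2
  rw [Real.log_exp] at this
  linarith
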